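/- With s_{z,k} := e_z e_0^{k−1}, the recursion for the harmonic product is equivalent to: s_{a,k} w ∗ s_{b,l} w' = s_{ab,k}(w ∗ s_{b,l} w') + s_{ab,l}(s_{a,k} w ∗ w') − s_{ab,k+l}(w ∗ w') for all a, b ∈ M, positive integers k, l, and w, w' ∈ 𝔥_M. -/

import Mathlib

open scoped BigOperators

/-- `𝔥_M`: the noncommutative polynomial ring `ℚ⟨e_z : z ∈ M⟩`, realized as the
monoid algebra of the free monoid on `M` over `ℚ` (concatenation product). -/
abbrev H (M : Type*) [MonoidWithZero M] : Type _ := MonoidAlgebra ℚ (FreeMonoid M)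

variable {M : Type*} [MonoidWithZero M]

/-- The word `e_{a_1} ⋯ e_{a_k}` as an element of `𝔥_M`. -/
noncomputable def wrd (l : List M) : H M := MonoidAlgebra.single (FreeMonoid.ofList l) 1

/-- The generator `e_z`. -/
noncomputable def e (z : M) : H M := wrd [z]

/-- The harmonic product on words, defined by the recursion
`e_a w ∗ e_b w' = e_{ab}(w ∗ e_b w' + e_a w ∗ w' − e_0 (w ∗ w'))`. -/
noncomputable def har : List M → List M → H M
  | [], w => wrd w
  | a :: w, [] => wrd (a :: w)
  | a :: w, b :: w' =>
      wrd [a * b] * (har w (b :: w') + har (a :: w) w' - wrd [0] * har w w')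
termination_by w w' => w.length + w'.length
decreasing_by all_goals (simp; try omega)

/-- The harmonic product `∗` on `𝔥_M`, extended ℚ-bilinearly from words. -/
noncomputable def hmul (f g : H M) : H M :=
  Finsupp.sum f.coeff fun w a => Finsupp.sum g.coeff fun w' b =>
    (a * b) • har (FreeMonoid.toList w) (FreeMonoid.toList w')

/-- Powers with respect to the harmonic product. -/
noncomputable def hpow (a : H M) : ℕ → H M
  | 0 => 1
  | n + 1 => hmul a (hpow a n)

/-- `s_{z,k} = e_z e_0^{k-1}` (concatenation product). -/
noncomputable def s (z : M) (k : ℕ) : H M := e z * (e 0) ^ (k - 1)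

/-- `sprod z k n = s_{z^n,k} s_{z^{n-1},k} ⋯ s_{z,k}` (concatenation), `sprod z k 0 = 1`. -/
noncomputable def sprod (z : M) (k : ℕ) : ℕ → H M
  | 0 => 1
  | n + 1 => s (z ^ (n + 1)) k * sprod z k n

/-- Cauchy product of power series over `(𝔥_M, ∗)`, represented as coefficient sequences. -/
noncomputable def hmulPS (f g : ℕ → H M) : ℕ → H M :=
  fun n => ∑ i ∈ Finset.range (n + 1), hmul (f i) (g (n - i))

/-- Powers of a power series w.r.t. the harmonic product. -/
noncomputable def psPow (f : ℕ → H M) : ℕ → (ℕ → H M)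
  | 0 => fun n => if n = 0 then 1 else 0
  | m + 1 => hmulPS f (psPow f m)

/-- `exp_∗` of a power series with zero constant term (coefficientwise). -/
noncomputable def expPS (f : ℕ → H M) : ℕ → H M :=
  fun n => ∑ m ∈ Finset.range (n + 1), ((Nat.factorial m : ℚ))⁻¹ • psPow f m n

/-- Coefficients of the formal sine `S_z(x) = Σ_{n≥0} s_{z^n,2}⋯s_{z,2} x^{2n+1}`. -/
noncomputable def Scoef (z : M) (d : ℕ) : H M :=
  if d % 2 = 1 then sprod z 2 (d / 2) else 0

/-- Coefficients of the formal cosine `C_z(x) = S_z'(x)`. -/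
noncomputable def Ccoef (z : M) (d : ℕ) : H M := ((d : ℚ) + 1) • Scoef z (d + 1)

/-- `w_{z,n} = (2n+1)! s_{z^n,2} ⋯ s_{z,2}`. -/
noncomputable def wz (z : M) (n : ℕ) : H M := ((Nat.factorial (2 * n + 1) : ℚ)) • sprod z 2 n

/-- `g_{z,m,n} = w_{z,m+n} − w_{z,m} ∗ w_{z,n}`. -/
noncomputable def gz (z : M) (m n : ℕ) : H M := wz z (m + n) - hmul (wz z m) (wz z n)

/-- Coefficient of `x^i y^j` in `A_z(x,y) = S_z(x+y) − S_z(x) ∗ C_z(y) − C_z(x) ∗ S_z(y)`. -/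
noncomputable def Acoef (z : M) (i j : ℕ) : H M :=
  (Nat.choose (i + j) i : ℚ) • Scoef z (i + j)
    - hmul (Scoef z i) (Ccoef z j) - hmul (Ccoef z i) (Scoef z j)

/-- Coefficient of `x^d` in `P_z(x) = −w_{z,1} ∗ S_z(x)^{∗2} + C_z(x)^{∗2}`. -/
noncomputable def Pcoef (z : M) (d : ℕ) : H M :=
  -(hmul (wz z 1) (hmulPS (Scoef z) (Scoef z) d)) + hmulPS (Ccoef z) (Ccoef z) d


/-- Coefficients of `S^T_{z,k}(x) = Σ_{n≥0} s_{z^n,k}⋯s_{z,k} x^{(n+1)k−1}`. -/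
noncomputable def STcoef (z : M) (k : ℕ) (d : ℕ) : H M :=
  if k ∣ (d + 1) then sprod z k ((d + 1) / k - 1) else 0

/-- Coefficients of the series `Σ_{n≥1} (s_{z^n,nk}/n) x^{nk}`. -/
noncomputable def gexp (z : M) (k : ℕ) (d : ℕ) : H M :=
  if d ≠ 0 ∧ k ∣ d then (((d / k : ℕ) : ℚ))⁻¹ • s (z ^ (d / k)) d else 0

/-- Coefficients of `S^R_{z,k}(x) = x^{k−1} exp_∗(Σ_{n≥1} (s_{z^n,nk}/n) x^{nk})`. -/
noncomputable def SRcoef (z : M) (k : ℕ) (d : ℕ) : H M :=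
  if k - 1 ≤ d then expPS (gexp z k) (d - (k - 1)) else 0

/-- Admissible words spanning `𝔥^0_M = ℚ ⊕ ⨁_{a≠0,1} 𝔥_M e_a ⊕ ⨁_{a≠0,b≠1} e_a 𝔥_M e_b`. -/
def adm0 (l : List M) : Prop :=
  l = [] ∨ ∃ h : l ≠ [],
    (l.getLast h ≠ 0 ∧ l.getLast h ≠ 1) ∨ (l.head h ≠ 0 ∧ l.getLast h ≠ 1)

/-- The subspace `𝔥^0_M`. -/
noncomputable def H0 (M : Type*) [MonoidWithZero M] : Submodule ℚ (H M) :=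
  Submodule.span ℚ {x | ∃ l : List M, adm0 l ∧ x = wrd l}

/-- Words spanning `𝔥^1_M = ⨁_{m≥0} 𝔥^0_M e_1^m`. -/
def adm1 (l : List M) : Prop :=
  ∃ (l₀ : List M) (m : ℕ), adm0 l₀ ∧ l = l₀ ++ List.replicate m 1

/-- The subspace `𝔥^1_M`. -/
noncomputable def H1 (M : Type*) [MonoidWithZero M] : Submodule ℚ (H M) :=
  Submodule.span ℚ {x | ∃ l : List M, adm1 l ∧ x = wrd l}

/-- `ℓ(w)`: the number of letters `e_a` of a word with `a ≠ 0`. -/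
noncomputable def lcount (l : List M) : ℕ :=
  l.countP fun a => @decide (a ≠ 0) (Classical.propDecidable _)

/-- `ℱ_d 𝔥^0_M`: span of admissible words `w` with `ℓ(w) ≤ d`. -/
noncomputable def F0 (M : Type*) [MonoidWithZero M] (d : ℕ) : Submodule ℚ (H M) :=
  Submodule.span ℚ {x | ∃ l : List M, adm0 l ∧ lcount l ≤ d ∧ x = wrd l}

/-- The ideal of `(𝔥_M, ∗)` generated by a set. -/
noncomputable def genIdeal (S : Set (H M)) : Submodule ℚ (H M) :=
  Submodule.span ℚ {x | ∃ a y, y ∈ S ∧ x = hmul a y}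

/-- The product on the polynomial ring `𝔥_{M,∗}[S,T]` (represented as
finitely supported coefficient families indexed by monomials `S^i T^j`). -/
noncomputable def polyMul2 (f g : (ℕ × ℕ) →₀ H M) : (ℕ × ℕ) →₀ H M :=
  Finsupp.sum f fun p a => Finsupp.sum g fun q b => Finsupp.single (p + q) (hmul a b)

/-- `φ : 𝔥^0_{M,∗}[S,T] → 𝔥_{M,∗}`, `Σ w_{ij} S^i T^j ↦ Σ w_{ij} ∗ e_0^{∗i} ∗ e_1^{∗j}`. -/
noncomputable def phi2 (f : (ℕ × ℕ) →₀ H M) : H M :=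
  Finsupp.sum f fun p a => hmul a (hmul (hpow (e 0) p.1) (hpow (e 1) p.2))

/-- The product on `𝔥_{M,∗}[S]`. -/
noncomputable def polyMul1 (f g : ℕ →₀ H M) : ℕ →₀ H M :=
  Finsupp.sum f fun p a => Finsupp.sum g fun q b => Finsupp.single (p + q) (hmul a b)

/-- `φ₁ : 𝔥^1_{M,∗}[S] → 𝔥_{M,∗}`, `Σ w_i S^i ↦ Σ w_i ∗ e_0^{∗i}`. -/
noncomputable def phi1 (f : ℕ →₀ H M) : H M :=
  Finsupp.sum f fun i a => hmul a (hpow (e 0) i)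



section HarmonicAux

lemma har_cons (a b : M) (u v : List M) :
    har (a::u) (b::v) = wrd [a * b] * (har u (b :: v) + har (a :: u) v - wrd [0] * har u v) := by
  rw [har]

lemma wrd_mul (l₁ l₂ : List M) : wrd l₁ * wrd l₂ = wrd (l₁ ++ l₂) := by
  simp [wrd, MonoidAlgebra.single_mul_single]

local notation "rep" => fun m => List.replicate m (0 : M)

lemma har_key : ∀ (n k l : ℕ), k + l ≤ n → ∀ (a b : M) (u v : List M),
    har (a :: (rep k ++ u)) (b :: (rep l ++ v)) =
      wrd (a*b :: rep k) * har u (b :: (rep l ++ v))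
        + wrd (a*b :: rep l) * har (a :: (rep k ++ u)) v
        - wrd (a*b :: rep (k + l + 1)) * har u v := by
  intro n
  induction n with
  | zero =>
    intro k l h a b u v
    obtain ⟨rfl, rfl⟩ : k = 0 ∧ l = 0 := by omega
    simp only [List.replicate, List.nil_append]
    rw [har_cons]
    simp only [mul_add, mul_sub, ← mul_assoc, wrd_mul]
    simp
  | succ n ih =>
    intro k l h a b u v
    match k, l with
    | 0, 0 =>
      simp only [List.replicate, List.nil_append]
      rw [har_cons]
      simp only [mul_add, mul_sub, ← mul_assoc, wrd_mul]
      simp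
    | 0, l' + 1 =>
      rw [har_cons]
      have h2 := ih 0 l' (by omega) a 0 u v
      simp only [mul_zero, zero_add, Nat.add_zero, List.nil_append, List.cons_append,
        List.append_assoc, Nat.add_eq, List.replicate_succ, List.replicate] at h2 ⊢
      rw [h2]
      simp only [mul_add, mul_sub, sub_mul, add_mul, ← mul_assoc, wrd_mul,
        List.singleton_append, List.cons_append, List.append_assoc, List.nil_append]
      abel
    | k' + 1, 0 =>
      rw [har_cons]
      have h2 := ih k' 0 (by omega) 0 b u v
      simp only [zero_mul, zero_add, Nat.add_zero, List.nil_append, List.cons_append,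
        List.append_assoc, Nat.add_eq, List.replicate_succ, List.replicate] at h2 ⊢
      rw [h2]
      simp only [mul_add, mul_sub, sub_mul, add_mul, ← mul_assoc, wrd_mul,
        List.singleton_append, List.cons_append, List.append_assoc, List.nil_append]
      abel
    | k' + 1, l' + 1 =>
      rw [har_cons]
      have h1 := ih k' (l' + 1) (by omega) 0 b u v
      have h2 := ih (k' + 1) l' (by omega) a 0 u v
      have h3 := ih k' l' (by omega) 0 0 u v
      simp only [zero_mul, mul_zero, zero_add, Nat.add_zero, List.nil_append, List.cons_append,
        List.append_assoc, Nat.add_eq, List.replicate_succ, List.replicate] at h1 h2 h3 ⊢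
      rw [h1, h2, h3]
      simp only [mul_add, mul_sub, sub_mul, add_mul, ← mul_assoc, wrd_mul,
        List.singleton_append, List.cons_append, List.append_assoc, List.nil_append]
      abel

lemma hmul_wrd (u v : List M) : hmul (wrd u) (wrd v) = har u v := by
  simp [hmul, wrd, Finsupp.sum_single_index]

lemma hmul_zero_left (g : H M) : hmul 0 g = 0 := by simp [hmul]

lemma hmul_zero_right (f : H M) : hmul f 0 = 0 := by simp [hmul]

lemma hmul_add_left (f g h : H M) : hmul (f + g) h = hmul f h + hmul g h := by
  unfold hmul
  rw [MonoidAlgebra.coeff_add, Finsupp.sum_add_index'] <;> simp [add_mul, add_smul, Finsupp.sum_add]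

lemma hmul_add_right (f g h : H M) : hmul f (g + h) = hmul f g + hmul f h := by
  unfold hmul
  rw [← Finsupp.sum_add]
  refine Finsupp.sum_congr fun w _ => ?_
  rw [MonoidAlgebra.coeff_add, Finsupp.sum_add_index'] <;> simp [mul_add, add_smul]

lemma hmul_smul_left (c : ℚ) (f g : H M) : hmul (c • f) g = c • hmul f g := by
  unfold hmul
  rw [MonoidAlgebra.coeff_smul, Finsupp.sum_smul_index (fun i => by simp), Finsupp.smul_sum]
  refine Finsupp.sum_congr fun w aw => ?_
  rw [Finsupp.smul_sum]
  refine Finsupp.sum_congr fun w' bw => ?_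
  rw [smul_smul]
  congr 1
  ring

lemma hmul_smul_right (c : ℚ) (f g : H M) : hmul f (c • g) = c • hmul f g := by
  unfold hmul
  rw [Finsupp.smul_sum]
  refine Finsupp.sum_congr fun w a => ?_
  rw [MonoidAlgebra.coeff_smul, Finsupp.sum_smul_index (fun i => by simp), Finsupp.smul_sum]
  refine Finsupp.sum_congr fun w' b => ?_
  rw [smul_smul]
  congr 1
  ring

lemma e_zero_pow (m : ℕ) : (e 0 : H M) ^ m = wrd (rep m) := by
  induction m with
  | zero => simp [wrd]; rfl
  | succ m ih => rw [pow_succ', ih, e, wrd_mul]; rfl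

lemma s_mul_wrd (z : M) (k : ℕ) (u : List M) :
    s z k * wrd u = wrd (z :: (rep (k - 1) ++ u)) := by
  rw [s, e_zero_pow, e, mul_assoc, wrd_mul, wrd_mul]
  rfl

lemma harmonic_s_recursion_words (a b : M) (k l : ℕ)
    (hk : 1 ≤ k) (hl : 1 ≤ l) (u v : List M) :
    hmul (s a k * wrd u) (s b l * wrd v) =
      s (a * b) k * hmul (wrd u) (s b l * wrd v)
        + s (a * b) l * hmul (s a k * wrd u) (wrd v)
        - s (a * b) (k + l) * hmul (wrd u) (wrd v) := by
  obtain ⟨k', rfl⟩ : ∃ k', k = k' + 1 := ⟨k - 1, by omega⟩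
  obtain ⟨l', rfl⟩ : ∃ l', l = l' + 1 := ⟨l - 1, by omega⟩
  simp only [s_mul_wrd, hmul_wrd, Nat.add_sub_cancel,
    show k' + 1 + (l' + 1) - 1 = k' + l' + 1 by omega]
  have := har_key (k' + l') k' l' le_rfl a b u v
  rw [this, s, s, s, e_zero_pow, e_zero_pow, e_zero_pow, e, wrd_mul, wrd_mul, wrd_mul,
    show k' + 1 + (l' + 1) - 1 = k' + l' + 1 by omega]
  rfl

end HarmonicAux

/-- The recursion for the harmonic product in terms of `s_{z,k} = e_z e_0^{k-1}`:
`s_{a,k} w ∗ s_{b,l} w' = s_{ab,k}(w ∗ s_{b,l}w') + s_{ab,l}(s_{a,k}w ∗ w') − s_{ab,k+l}(w ∗ w')`. -/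
theorem harmonic_s_recursion (M : Type*) [MonoidWithZero M] (a b : M) (k l : ℕ)
    (hk : 1 ≤ k) (hl : 1 ≤ l) (w w' : H M) :
    hmul (s a k * w) (s b l * w') =
      s (a * b) k * hmul w (s b l * w') + s (a * b) l * hmul (s a k * w) w'
        - s (a * b) (k + l) * hmul w w' := by
  have hof : ∀ x : FreeMonoid M, (MonoidAlgebra.of ℚ (FreeMonoid M) x : H M)
      = wrd (FreeMonoid.toList x) := by
    intro x
    simp [wrd, MonoidAlgebra.of_apply]
  have main : ∀ (w w' : H M), hmul (s a k * w) (s b l * w') =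
      s (a * b) k * hmul w (s b l * w') + s (a * b) l * hmul (s a k * w) w'
        - s (a * b) (k + l) * hmul w w' := by
    intro w
    induction w using MonoidAlgebra.induction_on with
    | of x =>
      intro w'
      induction w' using MonoidAlgebra.induction_on with
      | of y =>
        rw [hof, hof]
        exact harmonic_s_recursion_words a b k l hk hl _ _
      | add f g hf hg =>
        simp only [mul_add, hmul_add_left, hmul_add_right, hf, hg]
        abel
      | smul c f hf =>
        simp only [mul_smul_comm, hmul_smul_left, hmul_smul_right, hf, smul_sub, smul_add]
    | add f g hf hg =>
      intro w'
      simp only [mul_add, hmul_add_left, hmul_add_right, hf, hg]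
      abel
    | smul c f hf =>
      intro w'
      simp only [mul_smul_comm, hmul_smul_left, hmul_smul_right, hf, smul_sub, smul_add]
  exact main w w'
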